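/- Let H be a connected subgraph of a finite connected directed weighted graph G satisfying the Kirchhoff assumption, with #V_G = n and #V_H = r. Then for every 1 ≤ k ≤ r, λ_{k+n−r}(S_G) ≥ max( λ_k(S_H), λ_k(S^D_H) ), where eigenvalues are listed increasingly with multiplicity. -/

import Mathlib

open Finset

/-- The weighted inner product `(f,g)_m = ∑_x m(x) f(x) conj(g(x))` on functions `W → ℂ`. -/
noncomputable def innerM {W : Type*} [Fintype W] (m : W → ℝ) (f g : W → ℂ) : ℂ :=
  ∑ x, (m x : ℂ) * f x * (starRingEnd ℂ) (g x)

/-- The self-adjoint operator `S f(x) = (1/m(x)) ∑_y a(x,y) (f(x) - f(y))`, where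
`a(x,y) = b(x,y) + b(y,x)`. -/
noncomputable def opS {W : Type*} [Fintype W] (m : W → ℝ) (b : W → W → ℝ)
    (f : W → ℂ) (x : W) : ℂ :=
  (1 / (m x : ℂ)) * ∑ y, ((b x y + b y x : ℝ) : ℂ) * (f x - f y)

/-- `μ : Fin N → ℝ` lists, increasingly and with multiplicity, eigenvalues of the operator
`S` which is self-adjoint for the weighted inner product with weight `m`: `μ` is monotone
and there is a corresponding `m`-orthonormal family of eigenfunctions.  When
`N = dim = card W`, such a family is an orthonormal basis, so `μ` is exactly the increasing
enumeration `λ_1 ≤ … ≤ λ_N` of the eigenvalues of `S` with multiplicity. -/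
def IsMonoEigenListing {W : Type*} [Fintype W] (m : W → ℝ)
    (S : (W → ℂ) → (W → ℂ)) {N : ℕ} (μ : Fin N → ℝ) : Prop :=
  Monotone μ ∧ ∃ u : Fin N → (W → ℂ),
    (∀ i j, innerM m (u i) (u j) = if i = j then 1 else 0) ∧
    ∀ i, S (u i) = fun x => ((μ i : ℝ) : ℂ) * u i x

/-- `x` and `y` are neighbours in the directed weighted graph with edge weight `b`. -/
def Nbr {V : Type*} (b : V → V → ℝ) (x y : V) : Prop := 0 < b x y ∨ 0 < b y x

/-- Kirchhoff assumption: `β⁺(x) = β⁻(x)` for all `x`. -/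
def Kirchhoff {V : Type*} [Fintype V] (b : V → V → ℝ) : Prop :=
  ∀ x, ∑ y, b x y = ∑ y, b y x

/-- The graph with edge weight `b` is connected, ignoring orientation. -/
def ConnectedGraph {V : Type*} (b : V → V → ℝ) : Prop :=
  ∀ x y : V, Relation.ReflTransGen (Nbr b) x y

/-- The subgraph of `b` induced on `U` is connected, ignoring orientation. -/
def ConnOn {V : Type*} (b : V → V → ℝ) (U : Finset V) : Prop :=
  ∀ x ∈ U, ∀ y ∈ U,
    Relation.ReflTransGen (fun u v => u ∈ U ∧ v ∈ U ∧ Nbr b u v) x y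

/-- The interior of a set of vertices: those of its vertices all of whose neighbours lie
in the set. -/
def interiorSet {V : Type*} (b : V → V → ℝ) (Ω : Set V) : Set V :=
  {x | x ∈ Ω ∧ ∀ y, Nbr b x y → y ∈ Ω}

/-- The operator `S_H` of the subgraph induced on `U` (weights restricted from the ambient
graph), acting on functions `↥U → ℂ`. -/
noncomputable def opSsub {V : Type*} [Fintype V] (m : V → ℝ) (b : V → V → ℝ)
    (U : Finset V) : (↥U → ℂ) → (↥U → ℂ) :=
  opS (fun x : ↥U => m ↑x) (fun x y : ↥U => b ↑x ↑y)

/-- The Dirichlet operator `S^D_U`, acting on functions supported in `U` (identified with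
functions `↥U → ℂ`, extended by zero): `S^D_U f(x) = (1/m(x)) ∑_{y ∈ V} a(x,y)(f(x)-f(y))`
for `x ∈ U`. -/
noncomputable def opSDir {V : Type*} [Fintype V] [DecidableEq V] (m : V → ℝ) (b : V → V → ℝ)
    (U : Finset V) (f : ↥U → ℂ) (x : ↥U) : ℂ :=
  (1 / (m ↑x : ℂ)) * ∑ y : V, ((b ↑x y + b y ↑x : ℝ) : ℂ) *
    (f x - (if h : y ∈ U then f ⟨y, h⟩ else 0))

/-- The Dirichlet Laplacian `Δ^D_U`, acting on functions supported in `U`: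
`Δ^D_U f(x) = (1/m(x)) ∑_{y ∈ V} b(x,y)(f(x)-f(y))` for `x ∈ U`. -/
noncomputable def opDeltaDir {V : Type*} [Fintype V] [DecidableEq V] (m : V → ℝ) (b : V → V → ℝ)
    (U : Finset V) (f : ↥U → ℂ) (x : ↥U) : ℂ :=
  (1 / (m ↑x : ℂ)) * ∑ y : V, ((b ↑x y : ℝ) : ℂ) *
    (f x - (if h : y ∈ U then f ⟨y, h⟩ else 0))

namespace Stmt18Aux
set_option linter.unusedSectionVars false
set_option maxHeartbeats 1000000

variable {W : Type*} [Fintype W]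

lemma innerM_lincomb_left (m : W → ℝ) {N : ℕ} (c : Fin N → ℂ) (f : Fin N → W → ℂ)
    (g : W → ℂ) :
    innerM m (∑ i, c i • f i) g = ∑ i, c i * innerM m (f i) g := by
  simp only [innerM, Finset.mul_sum, Finset.sum_apply, Pi.smul_apply, smul_eq_mul,
    Finset.sum_mul]
  rw [Finset.sum_comm]
  exact Finset.sum_congr rfl fun i _ => Finset.sum_congr rfl fun x _ => by ring

lemma innerM_lincomb_right (m : W → ℝ) {N : ℕ} (c : Fin N → ℂ) (f : Fin N → W → ℂ)
    (g : W → ℂ) :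
    innerM m g (∑ i, c i • f i) = ∑ i, (starRingEnd ℂ) (c i) * innerM m g (f i) := by
  simp only [innerM, Finset.mul_sum, Finset.sum_apply, Pi.smul_apply, smul_eq_mul,
    Finset.sum_mul, map_sum, map_mul]
  rw [Finset.sum_comm]
  exact Finset.sum_congr rfl fun i _ => Finset.sum_congr rfl fun x _ => by ring

lemma innerM_lincomb_lincomb (m : W → ℝ) {N : ℕ} (c e : Fin N → ℂ) (u : Fin N → W → ℂ)
    (horth : ∀ i j, innerM m (u i) (u j) = if i = j then 1 else 0) :
    innerM m (∑ i, c i • u i) (∑ i, e i • u i)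
      = ∑ i, c i * (starRingEnd ℂ) (e i) := by
  rw [innerM_lincomb_left]
  refine Finset.sum_congr rfl fun i _ => ?_
  rw [innerM_lincomb_right]
  simp [horth, Finset.mul_sum, mul_comm]

lemma map_lincomb (T : (W → ℂ) → (W → ℂ))
    (hadd : ∀ f g, T (f + g) = T f + T g)
    (hsmul : ∀ (a : ℂ) f, T (a • f) = a • T f)
    {N : ℕ} (c : Fin N → ℂ) (f : Fin N → W → ℂ) :
    T (∑ i, c i • f i) = ∑ i, c i • T (f i) := by
  have h0 : T 0 = 0 := by
    have := hsmul 0 0; simpa using this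
  classical
  induction (Finset.univ : Finset (Fin N)) using Finset.induction with
  | empty => simpa using h0
  | insert _ _ hx ih =>
    rw [Finset.sum_insert hx, Finset.sum_insert hx, hadd, hsmul, ih]

variable {V : Type*} [Fintype V] [DecidableEq V]

noncomputable def extU (U : Finset V) (g : ↥U → ℂ) : V → ℂ :=
  fun y => if h : y ∈ U then g ⟨y, h⟩ else 0

lemma extU_coe (U : Finset V) (g : ↥U → ℂ) (x : ↥U) : extU U g ↑x = g x := by
  simp [extU, x.2]

lemma extU_sum (U : Finset V) {N : ℕ} (c : Fin N → ℂ) (v : Fin N → ↥U → ℂ) :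
    extU U (∑ i, c i • v i) = ∑ i, c i • extU U (v i) := by
  funext y
  by_cases h : y ∈ U <;> simp [extU, h]

lemma innerM_extU (m : V → ℝ) (U : Finset V) (g₁ g₂ : ↥U → ℂ) :
    innerM m (extU U g₁) (extU U g₂) = innerM (fun x : ↥U => m ↑x) g₁ g₂ := by
  rw [innerM, innerM]
  rw [← Finset.sum_subset (Finset.subset_univ U)
    (fun y _ hy => by simp [extU, hy])]
  rw [← Finset.sum_attach U (fun y => (m y : ℂ) * extU U g₁ y * (starRingEnd ℂ) (extU U g₂ y))]
  exact Finset.sum_congr rfl fun x _ => by rw [extU_coe, extU_coe]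

lemma opS_add (m : W → ℝ) (b : W → W → ℝ) (f g : W → ℂ) :
    opS m b (f + g) = opS m b f + opS m b g := by
  funext x
  simp only [opS, Pi.add_apply]
  rw [← mul_add, ← Finset.sum_add_distrib]
  congr 1
  exact Finset.sum_congr rfl fun y _ => by ring

lemma opS_smul (m : W → ℝ) (b : W → W → ℝ) (a : ℂ) (f : W → ℂ) :
    opS m b (a • f) = a • opS m b f := by
  funext x
  simp only [opS, Pi.smul_apply, smul_eq_mul, Finset.mul_sum]
  exact Finset.sum_congr rfl fun y _ => by ring

/-- innerM of opS of an extension, restricted to `U`. -/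
lemma innerM_opS_extU (m : V → ℝ) (b : V → V → ℝ) (U : Finset V) (g : ↥U → ℂ) :
    innerM m (opS m b (extU U g)) (extU U g)
      = ∑ x : ↥U, (m ↑x : ℂ) * ((1 / (m ↑x : ℂ)) *
          ∑ y : V, ((b ↑x y + b y ↑x : ℝ) : ℂ) * (g x - extU U g y)) *
          (starRingEnd ℂ) (g x) := by
  rw [innerM]
  rw [← Finset.sum_subset (Finset.subset_univ U)
    (fun y _ hy => by simp [extU, hy])]
  rw [← Finset.sum_attach U (fun y => (m y : ℂ) * opS m b (extU U g) y
    * (starRingEnd ℂ) (extU U g y))]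
  refine Finset.sum_congr rfl fun x _ => ?_
  simp only [opS, extU_coe]

lemma form_dir (m : V → ℝ) (b : V → V → ℝ) (U : Finset V) (g : ↥U → ℂ) :
    innerM (fun x : ↥U => m ↑x) (opSDir m b U g) g
      = innerM m (opS m b (extU U g)) (extU U g) := by
  rw [innerM_opS_extU, innerM]
  refine Finset.sum_congr rfl fun x _ => ?_
  rw [opSDir]
  congr 2

lemma form_sub (m : V → ℝ) (b : V → V → ℝ) (hm : ∀ x, 0 < m x) (hb : ∀ x y, 0 ≤ b x y)
    (U : Finset V) (g : ↥U → ℂ) :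
    (innerM (fun x : ↥U => m ↑x) (opSsub m b U g) g).re
      ≤ (innerM m (opS m b (extU U g)) (extU U g)).re := by
  have hcancel : ∀ x : V, (m x : ℂ) * ((1 / (m x : ℂ)) * 0) = 0 := by intro x; ring
  have key : innerM m (opS m b (extU U g)) (extU U g)
      = innerM (fun x : ↥U => m ↑x) (opSsub m b U g) g
        + ∑ x : ↥U, ((∑ y ∈ Finset.univ \ U, ((b ↑x y + b y ↑x : ℝ) : ℂ))
            * ((Complex.normSq (g x) : ℝ) : ℂ)) := by
    rw [innerM_opS_extU, innerM, ← Finset.sum_add_distrib]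
    refine Finset.sum_congr rfl fun x _ => ?_
    have hmx : (m (↑x : V) : ℂ) ≠ 0 := by
      exact_mod_cast (hm (↑x : V)).ne'
    have hsplit : ∑ y : V, ((b ↑x y + b y ↑x : ℝ) : ℂ) * (g x - extU U g y)
        = (∑ y : ↥U, ((b ↑x ↑y + b ↑y ↑x : ℝ) : ℂ) * (g x - g y))
          + ∑ y ∈ Finset.univ \ U, ((b ↑x y + b y ↑x : ℝ) : ℂ) * (g x - extU U g y) := by
      rw [← Finset.sum_sdiff (Finset.subset_univ U), add_comm]
      congr 1
      rw [← Finset.sum_attach U (fun y => ((b ↑x y + b y ↑x : ℝ) : ℂ) * (g x - extU U g y))]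
      exact Finset.sum_congr rfl fun y _ => by rw [extU_coe]
    simp only [opSsub, opS]
    rw [hsplit]
    have hout : ∀ y ∈ Finset.univ \ U, ((b ↑x y + b y ↑x : ℝ) : ℂ) * (g x - extU U g y)
        = ((b ↑x y + b y ↑x : ℝ) : ℂ) * g x := by
      intro y hy
      rw [Finset.mem_sdiff] at hy
      simp [extU, hy.2]
    rw [Finset.sum_congr rfl hout, ← Finset.sum_mul, ← Complex.mul_conj]
    field_simp
  rw [key, Complex.add_re]
  have : 0 ≤ (∑ x : ↥U, ((∑ y ∈ Finset.univ \ U, ((b ↑x y + b y ↑x : ℝ) : ℂ))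
      * ((Complex.normSq (g x) : ℝ) : ℂ))).re := by
    rw [Complex.re_sum]
    refine Finset.sum_nonneg fun x _ => ?_
    have : (∑ y ∈ Finset.univ \ U, ((b ↑x y + b y ↑x : ℝ) : ℂ))
        = ((∑ y ∈ Finset.univ \ U, (b ↑x y + b y ↑x) : ℝ) : ℂ) := by
      push_cast; rfl
    rw [this, ← Complex.ofReal_mul, Complex.ofReal_re]
    refine mul_nonneg (Finset.sum_nonneg fun y _ => add_nonneg (hb _ _) (hb _ _)) (Complex.normSq_nonneg _)
  linarith


lemma opSDir_add {V : Type*} [Fintype V] [DecidableEq V] (m : V → ℝ) (b : V → V → ℝ)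
    (U : Finset V) (f g : ↥U → ℂ) :
    opSDir m b U (f + g) = opSDir m b U f + opSDir m b U g := by
  funext x
  simp only [opSDir, Pi.add_apply]
  rw [← mul_add, ← Finset.sum_add_distrib]
  congr 1
  refine Finset.sum_congr rfl fun y _ => ?_
  by_cases h : y ∈ U <;> simp only [h, dif_pos, dif_neg, not_false_iff, Pi.add_apply] <;> ring

lemma opSDir_smul {V : Type*} [Fintype V] [DecidableEq V] (m : V → ℝ) (b : V → V → ℝ)
    (U : Finset V) (a : ℂ) (f : ↥U → ℂ) :
    opSDir m b U (a • f) = a • opSDir m b U f := by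
  funext x
  simp only [opSDir, Pi.smul_apply, smul_eq_mul, Finset.mul_sum]
  refine Finset.sum_congr rfl fun y _ => ?_
  by_cases h : y ∈ U <;>
    simp only [h, dif_pos, dif_neg, not_false_iff, Pi.smul_apply, smul_eq_mul] <;> ring

lemma key (m : V → ℝ)
    (U : Finset V) (n r : ℕ) (hn : n = Fintype.card V) (hr : r = U.card) (hrn : r ≤ n)
    (S : (V → ℂ) → (V → ℂ)) (hSadd : ∀ f g, S (f + g) = S f + S g)
    (hSsmul : ∀ (a : ℂ) f, S (a • f) = a • S f)
    (T : (↥U → ℂ) → (↥U → ℂ)) (hTadd : ∀ f g, T (f + g) = T f + T g)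
    (hTsmul : ∀ (a : ℂ) f, T (a • f) = a • T f)
    (μG : Fin n → ℝ) (ν : Fin r → ℝ)
    (hμG : IsMonoEigenListing m S μG)
    (hν : IsMonoEigenListing (fun x : ↥U => m ↑x) T ν)
    (hform : ∀ g : ↥U → ℂ,
      (innerM (fun x : ↥U => m ↑x) (T g) g).re ≤ (innerM m (S (extU U g)) (extU U g)).re)
    (k : Fin r) (jlt : k.1 + n - r < n) : ν k ≤ μG ⟨k.1 + n - r, jlt⟩ := by
  obtain ⟨hmono, u, huorth, huev⟩ := hμG
  obtain ⟨hνmono, v, hvorth, hvev⟩ := hν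
  have hk := k.isLt
  set j : Fin n := ⟨k.1 + n - r, jlt⟩ with hjdef
  set p := r - k.1 with hpdef
  set q := n - 1 - j.1 with hqdef
  have hjval : j.1 = k.1 + n - r := rfl
  have hq : q = p - 1 := by omega
  have hp1 : 1 ≤ p := by omega
  set kemb : Fin p → Fin r := fun i => ⟨k.1 + i.1, by have := i.isLt; omega⟩ with hkemb
  set temb : Fin q → Fin n := fun t => ⟨j.1 + 1 + t.1, by have := t.isLt; omega⟩ with htemb
  set w : Fin p → (V → ℂ) := fun i => extU U (v (kemb i)) with hw
  -- orthonormality of the restricted families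
  have hvorth' : ∀ i i' : Fin p, innerM (fun x : ↥U => m ↑x) (v (kemb i)) (v (kemb i'))
      = if i = i' then 1 else 0 := by
    intro i i'
    rw [hvorth]
    by_cases h : i = i'
    · simp [h]
    · have hne : kemb i ≠ kemb i' := by
        intro hh
        apply h
        have : (kemb i).1 = (kemb i').1 := by rw [hh]
        simp only [hkemb] at this
        exact Fin.ext (by omega)
      simp [h, hne]
  have hworth : ∀ i i' : Fin p, innerM m (w i) (w i') = if i = i' then 1 else 0 := by
    intro i i'
    rw [hw]
    simp only []
    rw [innerM_extU]
    exact hvorth' i i'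
  -- the linear map given by the orthogonality constraints
  set L : (Fin p → ℂ) →ₗ[ℂ] (Fin q → ℂ) :=
    { toFun := fun c => fun t => ∑ i, c i * innerM m (w i) (u (temb t)),
      map_add' := by
        intro c c'
        funext t
        simp [add_mul, Finset.sum_add_distrib]
      map_smul' := by
        intro a c
        funext t
        simp only [Pi.smul_apply, smul_eq_mul, RingHom.id_apply, Finset.mul_sum]
        exact Finset.sum_congr rfl fun i _ => by ring } with hL
  have hnotinj : ¬ Function.Injective L := by
    intro hinj
    have h1 := LinearMap.finrank_le_finrank_of_injective hinj
    simp only [Module.finrank_fin_fun] at h1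
    omega
  obtain ⟨c₁, c₂, hLc, hne⟩ := Function.not_injective_iff.mp hnotinj
  set c : Fin p → ℂ := c₁ - c₂ with hcdef
  have hc0 : c ≠ 0 := sub_ne_zero.mpr hne
  have hLc0 : L c = 0 := by rw [hcdef, map_sub, hLc, sub_self]
  set f : V → ℂ := ∑ i, c i • w i with hf
  set g : ↥U → ℂ := ∑ i, c i • v (kemb i) with hg
  have hfg : extU U g = f := by
    rw [hg, extU_sum]
  -- linear independence of u and the basis expansion
  have hLI : LinearIndependent ℂ u := by
    rw [Fintype.linearIndependent_iff]
    intro gc hsum i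
    have h2 := innerM_lincomb_left m gc u (u i)
    rw [hsum] at h2
    have h3 : innerM m (0 : V → ℂ) (u i) = 0 := by simp [innerM]
    rw [h3] at h2
    simp only [huorth, mul_ite, mul_one, mul_zero] at h2
    rw [Finset.sum_ite_eq' Finset.univ i gc] at h2
    simpa using h2.symm
  have hcard : Fintype.card (Fin n) = Module.finrank ℂ (V → ℂ) := by
    simp [Module.finrank_pi, hn]
  haveI : Nonempty (Fin n) := ⟨j⟩
  set B := basisOfLinearIndependentOfCardEqFinrank hLI hcard with hBdef
  have hB : ⇑B = u := coe_basisOfLinearIndependentOfCardEqFinrank hLI hcard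
  set d : Fin n → ℂ := fun t => B.repr f t with hd
  have hfd : f = ∑ t, d t • u t := by
    have h4 := B.sum_repr f
    rw [hB] at h4
    exact h4.symm
  have hdt : ∀ t, d t = innerM m f (u t) := by
    intro t
    conv_rhs => rw [hfd]
    rw [innerM_lincomb_left]
    simp only [huorth, mul_ite, mul_one, mul_zero]
    rw [Finset.sum_ite_eq' Finset.univ t d]
    simp
  have hdzero : ∀ t : Fin n, j.1 < t.1 → d t = 0 := by
    intro t ht
    have htq : t.1 - j.1 - 1 < q := by have := t.isLt; omega
    have h3 : temb ⟨t.1 - j.1 - 1, htq⟩ = t := by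
      rw [htemb]
      exact Fin.ext (by simp; omega)
    have h4 := congrFun hLc0 ⟨t.1 - j.1 - 1, htq⟩
    have h5 : L c ⟨t.1 - j.1 - 1, htq⟩
        = innerM m f (u (temb ⟨t.1 - j.1 - 1, htq⟩)) := by
      rw [hL]
      simp only [LinearMap.coe_mk, AddHom.coe_mk]
      rw [hf, innerM_lincomb_left]
    rw [hdt t, ← h3, ← h5, h4]
    rfl
  -- norm computations
  have hnormf : innerM m f f = ∑ i, ((Complex.normSq (c i) : ℝ) : ℂ) := by
    rw [hf, innerM_lincomb_lincomb m c c w hworth]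
    exact Finset.sum_congr rfl fun i _ => Complex.mul_conj _
  have hnorm2 : innerM m f f = ∑ t, ((Complex.normSq (d t) : ℝ) : ℂ) := by
    conv_lhs => rw [hfd]
    rw [innerM_lincomb_lincomb m d d u huorth]
    exact Finset.sum_congr rfl fun t _ => Complex.mul_conj _
  set sC : ℝ := ∑ i, Complex.normSq (c i) with hsC
  have hsum_eq : ∑ t, Complex.normSq (d t) = sC := by
    have h6 := hnorm2.symm.trans hnormf
    rw [hsC]
    exact_mod_cast h6
  have hsC_pos : 0 < sC := by
    obtain ⟨i₀, hi₀⟩ := Function.ne_iff.mp hc0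
    refine Finset.sum_pos' (fun i _ => Complex.normSq_nonneg _)
      ⟨i₀, Finset.mem_univ _, Complex.normSq_pos.mpr ?_⟩
    simpa using hi₀
  -- quadratic form of S
  have hSf : S f = ∑ t, (d t * (μG t : ℂ)) • u t := by
    rw [hfd, map_lincomb S hSadd hSsmul]
    refine Finset.sum_congr rfl fun t _ => ?_
    rw [huev t]
    funext x
    simp only [Pi.smul_apply, smul_eq_mul]
    ring
  have hQG : innerM m (S f) f = ∑ t, ((μG t * Complex.normSq (d t) : ℝ) : ℂ) := by
    rw [hSf]
    conv_lhs => rw [hfd]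
    rw [innerM_lincomb_lincomb m _ d u huorth]
    refine Finset.sum_congr rfl fun t _ => ?_
    rw [show (d t * (μG t : ℂ)) * (starRingEnd ℂ) (d t)
        = (μG t : ℂ) * (d t * (starRingEnd ℂ) (d t)) from by ring, Complex.mul_conj]
    push_cast
    ring
  -- quadratic form of T
  have hTg : T g = ∑ i, (c i * (ν (kemb i) : ℂ)) • v (kemb i) := by
    rw [hg, map_lincomb T hTadd hTsmul]
    refine Finset.sum_congr rfl fun i _ => ?_
    rw [hvev (kemb i)]
    funext x
    simp only [Pi.smul_apply, smul_eq_mul]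
    ring
  have hQT : innerM (fun x : ↥U => m ↑x) (T g) g
      = ∑ i, ((ν (kemb i) * Complex.normSq (c i) : ℝ) : ℂ) := by
    rw [hTg]
    conv_lhs => rw [hg]
    rw [innerM_lincomb_lincomb _ _ c _ hvorth']
    refine Finset.sum_congr rfl fun i _ => ?_
    rw [show (c i * (ν (kemb i) : ℂ)) * (starRingEnd ℂ) (c i)
        = (ν (kemb i) : ℂ) * (c i * (starRingEnd ℂ) (c i)) from by ring, Complex.mul_conj]
    push_cast
    ring
  -- real parts
  have e1 : (innerM m (S f) f).re = ∑ t, μG t * Complex.normSq (d t) := by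
    rw [hQG]
    rw [show (∑ t, ((μG t * Complex.normSq (d t) : ℝ) : ℂ))
        = ((∑ t, μG t * Complex.normSq (d t) : ℝ) : ℂ) from by push_cast; rfl]
    exact Complex.ofReal_re _
  have e4 : (innerM (fun x : ↥U => m ↑x) (T g) g).re
      = ∑ i, ν (kemb i) * Complex.normSq (c i) := by
    rw [hQT]
    rw [show (∑ i, ((ν (kemb i) * Complex.normSq (c i) : ℝ) : ℂ))
        = ((∑ i, ν (kemb i) * Complex.normSq (c i) : ℝ) : ℂ) from by push_cast; rfl]
    exact Complex.ofReal_re _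
  have e2 : ∑ t, μG t * Complex.normSq (d t) ≤ μG j * sC := by
    rw [← hsum_eq, Finset.mul_sum]
    refine Finset.sum_le_sum fun t _ => ?_
    by_cases ht : t.1 ≤ j.1
    · exact mul_le_mul_of_nonneg_right (hmono ht) (Complex.normSq_nonneg _)
    · rw [hdzero t (by omega)]
      simp
  have e3 : ν k * sC ≤ ∑ i, ν (kemb i) * Complex.normSq (c i) := by
    rw [hsC, Finset.mul_sum]
    refine Finset.sum_le_sum fun i _ => ?_
    refine mul_le_mul_of_nonneg_right (hνmono ?_) (Complex.normSq_nonneg _)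
    show k.1 ≤ (kemb i).1
    rw [hkemb]
    simp
  have e5 := hform g
  rw [hfg] at e5
  have final : ν k * sC ≤ μG j * sC := by
    calc ν k * sC ≤ ∑ i, ν (kemb i) * Complex.normSq (c i) := e3
    _ = (innerM (fun x : ↥U => m ↑x) (T g) g).re := e4.symm
    _ ≤ (innerM m (S f) f).re := e5
    _ = ∑ t, μG t * Complex.normSq (d t) := e1
    _ ≤ μG j * sC := e2
  exact le_of_mul_le_mul_right final hsC_pos




end Stmt18Aux

/-- let `H` be a connected subgraph (on vertex set `U`, `#U = r`) of a finite
connected directed weighted graph `G` (`#V = n`) satisfying the Kirchhoff assumption.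
Then for every `1 ≤ k ≤ r`, `λ_{k+n-r}(S_G) ≥ max(λ_k(S_H), λ_k(S^D_H))`. -/
theorem stmt18 {V : Type*} [Fintype V] [DecidableEq V] (m : V → ℝ) (b : V → V → ℝ)
    (hm : ∀ x, 0 < m x) (hb : ∀ x y, 0 ≤ b x y) (hloop : ∀ x, b x x = 0)
    (hconn : ConnectedGraph b) (hkirch : Kirchhoff b)
    (U : Finset V) (hUconn : ConnOn b U)
    (n r : ℕ) (hn : n = Fintype.card V) (hr : r = U.card) (hrn : r ≤ n)
    (μG : Fin n → ℝ) (μH : Fin r → ℝ) (μD : Fin r → ℝ)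
    (hμG : IsMonoEigenListing m (opS m b) μG)
    (hμH : IsMonoEigenListing (fun x : ↥U => m ↑x) (opSsub m b U) μH)
    (hμD : IsMonoEigenListing (fun x : ↥U => m ↑x) (opSDir m b U) μD) :
    ∀ k : Fin r, max (μH k) (μD k) ≤ μG ⟨k.1 + n - r, by have := k.isLt; omega⟩ := by
  intro k
  have jlt : k.1 + n - r < n := by have := k.isLt; omega
  have hH : μH k ≤ μG ⟨k.1 + n - r, jlt⟩ :=
    Stmt18Aux.key m U n r hn hr hrn (opS m b)
      (Stmt18Aux.opS_add m b) (Stmt18Aux.opS_smul m b)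
      (opSsub m b U)
      (fun f g => Stmt18Aux.opS_add _ _ f g) (fun a f => Stmt18Aux.opS_smul _ _ a f)
      μG μH hμG hμH
      (fun g => Stmt18Aux.form_sub m b hm hb U g) k jlt
  have hD : μD k ≤ μG ⟨k.1 + n - r, jlt⟩ :=
    Stmt18Aux.key m U n r hn hr hrn (opS m b)
      (Stmt18Aux.opS_add m b) (Stmt18Aux.opS_smul m b)
      (opSDir m b U)
      (Stmt18Aux.opSDir_add m b U) (Stmt18Aux.opSDir_smul m b U)
      μG μD hμG hμD
      (fun g => le_of_eq (congrArg Complex.re (Stmt18Aux.form_dir m b U g))) k jlt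
  exact max_le hH hD
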